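/- Let P, Q be probability measures on a metric space with W(P, Q) ≤ μ̃, and suppose a set family of 'violation' events satisfies: the adversarial violation probability V_A = P{δ : ∃ δ' with d(δ, δ') ≤ R and δ' ∈ V} for a measurable set V. Then Q(V) ≤ V_A + μ̃/R. -/

import Mathlib

open MeasureTheory

/-- The `1`-Wasserstein distance between two measures on a metric space:
the infimum over couplings `π` of `∫ d(δ, δ') dπ` (in `ℝ≥0∞`). -/
noncomputable def wasserstein1 {Δ : Type*} [MeasurableSpace Δ] [PseudoMetricSpace Δ]
    (P Q : Measure Δ) : ENNReal :=
  ⨅ π ∈ {π : Measure (Δ × Δ) |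
      IsProbabilityMeasure π ∧ π.map Prod.fst = P ∧ π.map Prod.snd = Q},
    ∫⁻ p, ENNReal.ofReal (dist p.1 p.2) ∂π

/-- Out-of-distribution bound: if `W(P, Q) ≤ μ̃` and the adversarial violation
probability is `V_A = P{δ : ∃ δ', d(δ, δ') ≤ R ∧ δ' ∈ V}`, then
`Q(V) ≤ V_A + μ̃ / R`. -/
theorem ood_violation_bound {Δ : Type*} [MeasurableSpace Δ]
    [MetricSpace Δ] [BorelSpace Δ] [SecondCountableTopology Δ]
    (P Q : Measure Δ) [IsProbabilityMeasure P] [IsProbabilityMeasure Q]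
    (μt R : ℝ) (hμt : 0 ≤ μt) (hR : 0 < R)
    (hW : wasserstein1 P Q ≤ ENNReal.ofReal μt)
    (V : Set Δ) (hV : MeasurableSet V)
    (hVR : MeasurableSet {δ : Δ | ∃ δ', dist δ δ' ≤ R ∧ δ' ∈ V})
    (VA : ENNReal) (hVA : VA = P {δ : Δ | ∃ δ', dist δ δ' ≤ R ∧ δ' ∈ V}) :
    Q V ≤ VA + ENNReal.ofReal (μt / R) := by
  set VR : Set Δ := {δ : Δ | ∃ δ', dist δ δ' ≤ R ∧ δ' ∈ V} with hVRdef
  have hRne : ENNReal.ofReal R ≠ 0 := by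
    simp [ENNReal.ofReal_eq_zero, not_le, hR]
  have hRnetop : ENNReal.ofReal R ≠ ⊤ := ENNReal.ofReal_ne_top
  refine ENNReal.le_of_forall_pos_le_add ?_
  intro ε hε _
  -- choose a coupling with integral < ofReal μt + ε * ofReal R
  have hlt : wasserstein1 P Q < ENNReal.ofReal μt + (ε : ENNReal) * ENNReal.ofReal R := by
    refine lt_of_le_of_lt hW ?_
    have hne : (ε : ENNReal) * ENNReal.ofReal R ≠ 0 := by
      apply mul_ne_zero
      · exact_mod_cast hε.ne'
      · exact hRne
    exact ENNReal.lt_add_right ENNReal.ofReal_ne_top hne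
  rw [wasserstein1] at hlt
  simp only [iInf_lt_iff] at hlt
  obtain ⟨π, ⟨hπprob, hπ1, hπ2⟩, hπint⟩ := hlt
  -- measurability of dist on the product
  have hdist : Measurable fun p : Δ × Δ => dist p.1 p.2 :=
    (continuous_dist.comp (continuous_fst.prodMk continuous_snd)).measurable
  -- the key set inclusion
  have hsub : {p : Δ × Δ | p.2 ∈ V} ⊆
      {p : Δ × Δ | p.1 ∈ VR} ∪ {p : Δ × Δ | ENNReal.ofReal R ≤ ENNReal.ofReal (dist p.1 p.2)} := by
    intro p hp
    by_cases h : dist p.1 p.2 ≤ R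
    · exact Or.inl ⟨p.2, h, hp⟩
    · exact Or.inr (ENNReal.ofReal_le_ofReal (le_of_lt (not_le.mp h)))
  have hQV : Q V = π {p : Δ × Δ | p.2 ∈ V} := by
    rw [← hπ2, Measure.map_apply measurable_snd hV]; rfl
  have hPVR : P VR = π {p : Δ × Δ | p.1 ∈ VR} := by
    rw [← hπ1, Measure.map_apply measurable_fst hVR]; rfl
  -- Markov inequality
  have hmarkov : π {p : Δ × Δ | ENNReal.ofReal R ≤ ENNReal.ofReal (dist p.1 p.2)}
      ≤ (∫⁻ p, ENNReal.ofReal (dist p.1 p.2) ∂π) / ENNReal.ofReal R :=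
    meas_ge_le_lintegral_div (hdist.ennreal_ofReal.aemeasurable) hRne hRnetop
  have hmarkov' : π {p : Δ × Δ | ENNReal.ofReal R ≤ ENNReal.ofReal (dist p.1 p.2)}
      ≤ ENNReal.ofReal (μt / R) + ε := by
    refine hmarkov.trans ?_
    have h1 : (∫⁻ p, ENNReal.ofReal (dist p.1 p.2) ∂π) / ENNReal.ofReal R
        ≤ (ENNReal.ofReal μt + (ε : ENNReal) * ENNReal.ofReal R) / ENNReal.ofReal R :=
      ENNReal.div_le_div_right hπint.le _
    refine h1.trans ?_
    rw [ENNReal.add_div, mul_div_assoc, ENNReal.div_self hRne hRnetop,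
      mul_one, ENNReal.ofReal_div_of_pos hR]
  calc Q V = π {p : Δ × Δ | p.2 ∈ V} := hQV
    _ ≤ π ({p : Δ × Δ | p.1 ∈ VR} ∪
        {p : Δ × Δ | ENNReal.ofReal R ≤ ENNReal.ofReal (dist p.1 p.2)}) :=
        measure_mono hsub
    _ ≤ π {p : Δ × Δ | p.1 ∈ VR} +
        π {p : Δ × Δ | ENNReal.ofReal R ≤ ENNReal.ofReal (dist p.1 p.2)} :=
        measure_union_le _ _
    _ ≤ P VR + (ENNReal.ofReal (μt / R) + ε) := by
        rw [hPVR]; exact add_le_add le_rfl hmarkov'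
    _ = VA + ENNReal.ofReal (μt / R) + ε := by rw [hVA]; ring
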